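/- arXiv:2207.03969 — 2 statements merged into one kernel-verified Lean document; each statement's English description precedes it below -/
import Mathlib

section
/- Let B ⊆ κ and define the operator Φ^B on subsets x of κ by: Φ^B(x) = cl(x ∩ B) if sup(x ∩ B) = sup(x), and Φ^B(x) = x \ sup(x ∩ B) otherwise, where cl(A) = A ∪ acc⁺(A) and acc⁺(A) = {α < ssup(A) : sup(A ∩ α) = α > 0}. Then: (1) sup(Φ^B(x)) = sup(x); (2) if sup(x ∩ B) = sup(x), then the set of non-accumulation points of Φ^B(x) is a cofinal subset of x ∩ B; (3) if x is a closed subset of sup(x), then Φ^B(x) ⊆ x and otp(Φ^B(x)) ≤ otp(x). -/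
open Set Ordinal

noncomputable section

abbrev O : Type 1 := Ordinal.{0}

/-- `ssup A` is the strict supremum of a set of ordinals. -/
def ssup (A : Set O) : O := sSup ((· + 1) '' A)

/-- `acc⁺(A)`: accumulation points below the strict sup. -/
def accP (A : Set O) : Set O := {α | α < ssup A ∧ 0 < α ∧ sSup (A ∩ Iio α) = α}

def accOf (A : Set O) : Set O := A ∩ accP A

def nacc (A : Set O) : Set O := A \ accOf A

def clOf (A : Set O) : Set O := A ∪ accP A

/-- order type of a set of ordinals -/
def otp (A : Set O) : Ordinal.{1} := Ordinal.type (Subrel ((· < ·) : O → O → Prop) (· ∈ A))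

/-- lift a small ordinal one universe up -/
def olift (a : O) : Ordinal.{1} := Ordinal.lift.{1} a

/-- `suc_σ(A)`: elements of `A` whose index in `A` is `j+1` for some `j < σ`. -/
def sucSet (σ : Ordinal.{1}) (A : Set O) : Set O := {β | β ∈ A ∧ ∃ j < σ, otp (A ∩ Iio β) = j + 1}

def UnbIn (A : Set O) (δ : O) : Prop := ∀ α < δ, ∃ β ∈ A, α < β ∧ β < δ

def IsClubIn (C : Set O) (δ : O) : Prop :=
  C ⊆ Iio δ ∧ UnbIn C δ ∧ ∀ α < δ, 0 < α → sSup (C ∩ Iio α) = α → α ∈ C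

def IsStatIn (S : Set O) (δ : O) : Prop :=
  S ⊆ Iio δ ∧ ∀ D, IsClubIn D δ → (S ∩ D).Nonempty

def Ecof (κ : O) (lam : Cardinal.{0}) : Set O := {δ | δ < κ ∧ δ.cof = lam}

def PhiSup (B x : Set O) : Set O :=
  if sSup (x ∩ B) = sSup x then clOf (x ∩ B) else x \ Iio (sSup (x ∩ B))

def PhiD (D x : Set O) : Set O :=
  if sSup (D ∩ Iio (sSup x)) = sSup x then
    {γ | ∃ η ∈ x, sInf D < η ∧ γ = sSup (D ∩ Iio η)}
  else x \ Iio (sSup (D ∩ Iio (sSup x)))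

/-- `cf(δ)`-additive proper ideal on `δ` extending the bounded ideal. -/
def GoodIdeal (δ : O) (J : Set (Set O)) : Prop :=
  (∀ A B : Set O, A ⊆ B → B ∈ J → A ∈ J) ∧
  (Iio δ ∉ J) ∧
  (∀ B : Set O, B ⊆ Iio δ → sSup B < δ → B ∈ J) ∧
  (∀ ξ < (Ordinal.cof δ).ord, ∀ f : O → Set O, (∀ i < ξ, f i ∈ J) → (⋃ i ∈ Iio ξ, f i) ∈ J)

section Aux

lemma aux_sSup_inter_Iio_le (A : Set O) (α : O) : sSup (A ∩ Iio α) ≤ α :=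
  csSup_le' fun _ hc => hc.2.le

lemma aux_mem_accP_le_sSup {A : Set O} (hA : BddAbove A) {α : O} (h : α ∈ accP A) :
    α ≤ sSup A :=
  h.2.2 ▸ csSup_le_csSup' hA inter_subset_left

lemma aux_clOf_le_sSup {A : Set O} (hA : BddAbove A) : ∀ c ∈ clOf A, c ≤ sSup A := by
  rintro c (hc | hc)
  · exact le_csSup hA hc
  · exact aux_mem_accP_le_sSup hA hc

lemma aux_bddAbove_clOf {A : Set O} (hA : BddAbove A) : BddAbove (clOf A) :=
  ⟨sSup A, fun c hc => aux_clOf_le_sSup hA c hc⟩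

lemma aux_sSup_clOf {A : Set O} (hA : BddAbove A) : sSup (clOf A) = sSup A :=
  le_antisymm (csSup_le' fun c hc => aux_clOf_le_sSup hA c hc)
    (csSup_le_csSup' (aux_bddAbove_clOf hA) subset_union_left)

lemma aux_ssup_mono {A C : Set O} (hC : BddAbove C) (h : A ⊆ C) : ssup A ≤ ssup C := by
  obtain ⟨b, hb⟩ := hC
  have hbd : BddAbove ((· + 1) '' C) := by
    refine ⟨b + 1, ?_⟩
    rintro _ ⟨a, ha, rfl⟩
    exact add_le_add_left (hb ha) 1
  exact csSup_le_csSup' hbd (Set.image_mono h)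

lemma aux_sSup_nacc {C : Set O} (hC : BddAbove C) : sSup (nacc C) = sSup C := by
  refine le_antisymm (csSup_le_csSup' hC diff_subset) ?_
  by_contra hlt
  push_neg at hlt
  set s := sSup (nacc C) with hs
  have hne : C.Nonempty := by
    rcases C.eq_empty_or_nonempty with rfl | h
    · simp only [nacc, accOf, Set.empty_diff, hs] at hlt
      exact absurd hlt (lt_irrefl _)
    · exact h
  obtain ⟨β, hβC, hβ⟩ := exists_lt_of_lt_csSup hne hlt
  set T : Set O := {γ ∈ C | s < γ} with hT
  have hTne : T.Nonempty := ⟨β, hβC, hβ⟩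
  set α := sInf T with hα
  have hαT : α ∈ T := csInf_mem hTne
  have hub : ∀ c ∈ C ∩ Iio α, c ≤ s := by
    rintro c ⟨hcC, hcα⟩
    by_contra hcs
    push_neg at hcs
    exact absurd hcα (not_lt.2 (csInf_le (OrderBot.bddBelow T) ⟨hcC, hcs⟩))
  have hsup : sSup (C ∩ Iio α) ≤ s := csSup_le' hub
  have hαn : α ∈ nacc C := by
    refine ⟨hαT.1, fun hacc => ?_⟩
    exact absurd hacc.2.2.2 (ne_of_lt (lt_of_le_of_lt hsup hαT.2))
  exact absurd hαT.2 (not_lt.2 (le_csSup (hC.mono diff_subset) hαn))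

lemma aux_nacc_clOf_subset {A : Set O} (hA : BddAbove A) : nacc (clOf A) ⊆ A := by
  rintro c ⟨hcC, hnc⟩
  rcases hcC with hc | hc
  · exact hc
  · exfalso
    apply hnc
    refine ⟨Or.inr hc, ?_, hc.2.1, ?_⟩
    · exact lt_of_lt_of_le hc.1 (aux_ssup_mono (aux_bddAbove_clOf hA) subset_union_left)
    · refine le_antisymm (aux_sSup_inter_Iio_le _ _) ?_
      calc c = sSup (A ∩ Iio c) := hc.2.2.symm
        _ ≤ sSup (clOf A ∩ Iio c) := csSup_le_csSup'
            ((aux_bddAbove_clOf hA).mono inter_subset_left)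
            (inter_subset_inter_left _ subset_union_left)

lemma aux_otp_mono {A C : Set O} (h : A ⊆ C) : otp A ≤ otp C :=
  RelEmbedding.ordinal_type_le (r := Subrel ((· < ·) : O → O → Prop) (· ∈ A))
    (s := Subrel ((· < ·) : O → O → Prop) (· ∈ C)) ⟨⟨Set.inclusion h, Set.inclusion_injective h⟩, Iff.rfl⟩

end Aux

set_option maxHeartbeats 1000000 in
/-- basic properties of the operator `Φ^B`. -/
theorem statement1 (κ : O) (B x : Set O) (hB : B ⊆ Iio κ) (hx : x ⊆ Iio κ) :
    sSup (PhiSup B x) = sSup x ∧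
    (sSup (x ∩ B) = sSup x →
      nacc (PhiSup B x) ⊆ x ∩ B ∧ sSup (nacc (PhiSup B x)) = sSup x) ∧
    (accP x ⊆ x → PhiSup B x ⊆ x ∧ otp (PhiSup B x) ≤ otp x) := by
  have hxb : BddAbove x := ⟨κ, fun a ha => (hx ha).le⟩
  have hAb : BddAbove (x ∩ B) := hxb.mono inter_subset_left
  by_cases h : sSup (x ∩ B) = sSup x
  · simp only [PhiSup, if_pos h]
    have hsup : sSup (clOf (x ∩ B)) = sSup x := (aux_sSup_clOf hAb).trans h
    refine ⟨hsup, fun _ => ⟨aux_nacc_clOf_subset hAb, (aux_sSup_nacc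
      (aux_bddAbove_clOf hAb)).trans hsup⟩, fun hcl => ⟨?_, ?_⟩⟩
    · rintro c (hc | hc)
      · exact hc.1
      · refine hcl ⟨lt_of_lt_of_le hc.1 (aux_ssup_mono hxb inter_subset_left),
          hc.2.1, le_antisymm (aux_sSup_inter_Iio_le _ _) ?_⟩
        calc c = sSup (x ∩ B ∩ Iio c) := hc.2.2.symm
          _ ≤ sSup (x ∩ Iio c) := csSup_le_csSup' (hxb.mono inter_subset_left)
              (inter_subset_inter_left _ inter_subset_left)
    · apply aux_otp_mono
      rintro c (hc | hc)
      · exact hc.1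
      · refine hcl ⟨lt_of_lt_of_le hc.1 (aux_ssup_mono hxb inter_subset_left),
          hc.2.1, le_antisymm (aux_sSup_inter_Iio_le _ _) ?_⟩
        calc c = sSup (x ∩ B ∩ Iio c) := hc.2.2.symm
          _ ≤ sSup (x ∩ Iio c) := csSup_le_csSup' (hxb.mono inter_subset_left)
              (inter_subset_inter_left _ inter_subset_left)
  · simp only [PhiSup, if_neg h]
    have hs : sSup (x ∩ B) < sSup x :=
      lt_of_le_of_ne (csSup_le_csSup' hxb inter_subset_left) h
    have hsup : sSup (x \ Iio (sSup (x ∩ B))) = sSup x := by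
      refine le_antisymm (csSup_le_csSup' hxb diff_subset) ?_
      by_contra hlt
      push_neg at hlt
      have hne : x.Nonempty := by
        by_contra hne'
        rw [Set.not_nonempty_iff_eq_empty] at hne'
        subst hne'
        rw [csSup_empty] at hs
        exact not_lt_bot hs
      have hmax : max (sSup (x \ Iio (sSup (x ∩ B)))) (sSup (x ∩ B)) < sSup x :=
        max_lt hlt hs
      obtain ⟨c, hcx, hc⟩ := exists_lt_of_lt_csSup hne hmax
      have hc1 : sSup (x \ Iio (sSup (x ∩ B))) < c := lt_of_le_of_lt (le_max_left _ _) hc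
      have hc2 : sSup (x ∩ B) < c := lt_of_le_of_lt (le_max_right _ _) hc
      have hmem : c ∈ x \ Iio (sSup (x ∩ B)) :=
        ⟨hcx, fun hcI => (not_lt.2 hc2.le) hcI⟩
      have hle : c ≤ sSup (x \ Iio (sSup (x ∩ B))) := le_csSup (hxb.mono diff_subset) hmem
      exact absurd hle (not_le.2 hc1)
    exact ⟨hsup, fun h' => absurd h' h, fun _ => ⟨diff_subset, aux_otp_mono diff_subset⟩⟩
end
end

section
/- Suppose S ⊆ κ is stationary and ⟨C_δ : δ ∈ S⟩ is an amenable C-sequence, meaning that for every club D ⊆ κ the set {δ ∈ S : sup((D ∩ δ) \ C_δ) < δ} is nonstationary in κ. If κ ≥ ℵ₂, then there exists a club D ⊆ κ such that for every club E ⊆ κ there exists δ ∈ S with sup(nacc(Φ_D(C_δ)) ∩ E) = δ. -/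
open Set Ordinal

noncomputable section

/-! ### Auxiliary lemmas -/

lemma bdd_of_subset_Iio {s : Set O} {b : O} (h : s ⊆ Iio b) : BddAbove s :=
  ⟨b, fun _ hx => (h hx).le⟩

lemma sSup_le_of_lt {s : Set O} {b : O} (h : ∀ x ∈ s, x < b) : sSup s ≤ b :=
  csSup_le' (fun x hx => (h x hx).le)

lemma exists_gt_of_sSup {s : Set O} {b x : O} (h : sSup s = b) (hx : x < b) :
    ∃ y ∈ s, x < y := by
  by_contra hc
  push_neg at hc
  exact absurd (h ▸ csSup_le' (fun y hy => hc y hy) : b ≤ x) (not_le.2 hx)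

lemma sSup_eq_of_unb {s : Set O} {b : O} (h1 : ∀ x ∈ s, x < b)
    (h2 : ∀ x < b, ∃ y ∈ s, x < y) : sSup s = b := by
  refine le_antisymm (sSup_le_of_lt h1) (le_of_forall_lt fun x hx => ?_)
  obtain ⟨y, hy, hxy⟩ := h2 x hx
  exact hxy.trans_le (le_csSup (bdd_of_subset_Iio (fun z hz => h1 z hz)) hy)

lemma sSup_mono' {s t : Set O} {b : O} (hst : s ⊆ t) (ht : t ⊆ Iio b) (hs : s.Nonempty) :
    sSup s ≤ sSup t := csSup_le_csSup (bdd_of_subset_Iio ht) hs hst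

lemma isClubIn_Iio {κo : O} (h : Order.IsSuccLimit κo) : IsClubIn (Iio κo) κo :=
  ⟨le_refl _, fun α hα => ⟨α + 1, h.succ_lt hα, Order.lt_succ α, h.succ_lt hα⟩,
    fun α hα _ _ => hα⟩

lemma club_sSup_mem {T : Set O} {κo η : O} (hT : IsClubIn T κo) (hη : η < κo)
    (hne : (T ∩ Iio η).Nonempty) : sSup (T ∩ Iio η) ∈ T := by
  set s := T ∩ Iio η with hs
  set g := sSup s with hg
  have hbd : BddAbove s := bdd_of_subset_Iio (fun x hx => hx.2)
  have hgη : g ≤ η := sSup_le_of_lt (fun x hx => hx.2)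
  by_cases hmem : g ∈ s
  · exact hmem.1
  · have hlt : ∀ x ∈ s, x < g := fun x hx =>
      lt_of_le_of_ne (le_csSup hbd hx) (fun he => hmem (he ▸ hx))
    obtain ⟨x0, hx0⟩ := hne
    have hg0 : 0 < g := lt_of_le_of_lt (zero_le : (0:O) ≤ x0) (hlt _ hx0)
    have hsub : T ∩ Iio g ⊆ s := fun x hx => ⟨hx.1, lt_of_lt_of_le hx.2 hgη⟩
    have hsub2 : s ⊆ T ∩ Iio g := fun x hx => ⟨hx.1, hlt x hx⟩
    have heq : T ∩ Iio g = s := le_antisymm hsub hsub2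
    exact hT.2.2 g (lt_of_le_of_lt hgη hη) hg0 (by rw [heq, ← hg])

lemma iterate_limit {κ : Cardinal.{0}} (hκ : κ.IsRegular) (hω : Cardinal.aleph0 < κ)
    (g : O → O) (h1 : ∀ γ < κ.ord, γ < g γ) (h2 : ∀ γ < κ.ord, g γ < κ.ord)
    {α : O} (hα : α < κ.ord) :
    ∃ (β : O) (f : ℕ → O), β < κ.ord ∧ α < β ∧ 0 < β ∧
      (∀ n, f n < κ.ord) ∧ (∀ n, f n < β) ∧ (∀ n, f (n + 1) = g (f n)) ∧
      (∀ x < β, ∃ n, x < f n) := by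
  have hlim : Order.IsSuccLimit (Cardinal.ord κ) := Cardinal.isSuccLimit_ord hκ.aleph0_le
  set f : ℕ → O := fun n => g^[n] (α + 1) with hf
  have hfκ : ∀ n, f n < κ.ord := by
    intro n
    induction n with
    | zero => exact hlim.succ_lt hα
    | succ n ih => show g^[n+1] (α+1) < κ.ord
                   rw [Function.iterate_succ_apply']; exact h2 _ ih
  have hstep : ∀ n, f (n + 1) = g (f n) := fun n => Function.iterate_succ_apply' g n (α+1)
  have hmono : ∀ n, f n < f (n + 1) := fun n => (hstep n) ▸ h1 _ (hfκ n)
  set β : O := ⨆ n, f n with hβ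
  have hbdd : BddAbove (range f) := Ordinal.bddAbove_range f
  have hle : ∀ n, f n ≤ β := fun n => le_ciSup hbdd n
  have hβκ : β < κ.ord := by
    refine Ordinal.iSup_lt_ord ?_ hfκ
    rw [Cardinal.mk_eq_aleph0 ℕ]
    rwa [hκ.cof_eq]
  have hfβ : ∀ n, f n < β := fun n => lt_of_lt_of_le (hmono n) (hle (n + 1))
  have hf0 : f 0 = α + 1 := rfl
  have hαβ : α < β := by
    have := hle 0
    rw [hf0] at this
    exact lt_of_lt_of_le (lt_add_one α) this
  refine ⟨β, f, hβκ, hαβ, lt_of_le_of_lt (zero_le : (0:O) ≤ α) hαβ, hfκ, hfβ, hstep, ?_⟩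
  intro x hx
  by_contra hc
  push_neg at hc
  exact absurd (ciSup_le hc : β ≤ x) (not_le.2 hx)

lemma isClubIn_iInter {κ : Cardinal.{0}} (hκ : κ.IsRegular) (hω : Cardinal.aleph0 < κ)
    {i : O} (hi : i < κ.ord) {T : O → Set O} (hT : ∀ j < i, IsClubIn (T j) κ.ord) :
    IsClubIn (Iio κ.ord ∩ ⋂ j : Iio i, T j) κ.ord := by
  have hlim : Order.IsSuccLimit κ.ord := Cardinal.isSuccLimit_ord hκ.aleph0_le
  refine ⟨inter_subset_left, ?_, ?_⟩
  · intro α hα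
    have hnext : ∀ j γ, ∃ x, (j < i → γ < κ.ord → x ∈ T j ∧ γ < x) ∧ x < κ.ord := by
      intro j γ
      by_cases h : j < i ∧ γ < κ.ord
      · obtain ⟨x, hx, hγx, hxκ⟩ := (hT j h.1).2.1 γ h.2
        exact ⟨x, fun _ _ => ⟨hx, hγx⟩, hxκ⟩
      · refine ⟨0, fun h1 h2 => absurd ⟨h1, h2⟩ h, ?_⟩
        exact (Cardinal.isSuccLimit_ord hκ.aleph0_le).bot_lt
    choose next hnextP hnextκ using hnext
    set F : i.ToType → O → O := fun t γ => next ((ToType.mk).symm t) γ with hF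
    set g : O → O := fun γ => max (γ + 1) (⨆ t, F t γ) with hg
    have hgκ : ∀ γ < κ.ord, g γ < κ.ord := by
      intro γ hγ
      refine max_lt (hlim.succ_lt hγ) ?_
      refine Ordinal.iSup_lt_ord ?_ (fun t => hnextκ _ γ)
      rw [Cardinal.mk_toType, hκ.cof_eq]
      exact (Cardinal.lt_ord.1 hi)
    have hg1 : ∀ γ < κ.ord, γ < g γ := fun γ _ => lt_of_lt_of_le (lt_add_one γ) (le_max_left _ _)
    have hnext_le_g : ∀ (j : O) (hj : j < i) γ, next j γ ≤ g γ := by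
      intro j hj γ
      have h : next j γ = F ((ToType.mk) ⟨j, hj⟩) γ := by
        rw [hF]; simp
      rw [h]
      exact le_trans (le_ciSup (Ordinal.bddAbove_range _) _) (le_max_right _ _)
    obtain ⟨β, f, hβκ, hαβ, hβ0, hfκ, hfβ, hstep, hcof⟩ := iterate_limit hκ hω g hg1 hgκ hα
    refine ⟨β, ⟨hβκ, ?_⟩, hαβ, hβκ⟩
    rw [mem_iInter]
    rintro ⟨j, hj⟩
    have hmemj : ∀ n : ℕ, next j (f n) ∈ T j ∧ f n < next j (f n) :=
      fun n => hnextP j (f n) hj (hfκ n)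
    refine (hT j hj).2.2 β hβκ hβ0 ?_
    refine sSup_eq_of_unb (fun x hx => hx.2) ?_
    intro x hx
    obtain ⟨n, hn⟩ := hcof x hx
    have h1 : next j (f n) ≤ f (n + 1) := by rw [hstep n]; exact hnext_le_g j hj (f n)
    have h2 : f (n + 1) < β := hfβ (n + 1)
    exact ⟨next j (f n), ⟨(hmemj n).1, lt_of_le_of_lt h1 h2⟩, lt_trans hn (hmemj n).2⟩
  · intro α hα hα0 hsup
    have hne : ((Iio κ.ord ∩ ⋂ j : Iio i, T j) ∩ Iio α).Nonempty := by
      rcases eq_empty_or_nonempty ((Iio κ.ord ∩ ⋂ j : Iio i, T j) ∩ Iio α) with h | h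
      · rw [h] at hsup; simp [sSup_empty] at hsup; exact absurd hsup.symm (ne_of_gt hα0)
      · exact h
    refine ⟨hα, ?_⟩
    rw [mem_iInter]
    rintro ⟨j, hj⟩
    refine (hT j hj).2.2 α hα hα0 ?_
    have hsub : (Iio κ.ord ∩ ⋂ j' : Iio i, T j') ∩ Iio α ⊆ T j ∩ Iio α := by
      rintro x ⟨⟨_, hx2⟩, hx3⟩
      rw [mem_iInter] at hx2
      exact ⟨hx2 ⟨j, hj⟩, hx3⟩
    refine le_antisymm (sSup_le_of_lt (fun x hx => hx.2)) ?_
    calc α = sSup ((Iio κ.ord ∩ ⋂ j' : Iio i, T j') ∩ Iio α) := hsup.symm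
    _ ≤ sSup (T j ∩ Iio α) := sSup_mono' hsub (fun x hx => hx.2) hne

lemma isClubIn_inter {κ : Cardinal.{0}} (hκ : κ.IsRegular) (hω : Cardinal.aleph0 < κ)
    {A B : Set O} (hA : IsClubIn A κ.ord) (hB : IsClubIn B κ.ord) :
    IsClubIn (A ∩ B) κ.ord := by
  set T : O → Set O := fun j => if j = 0 then A else B with hT
  have hωκ : (ω : O) < κ.ord := by
    rw [Cardinal.lt_ord]
    simpa using hω
  have hclub : ∀ j < (ω : O), IsClubIn (T j) κ.ord := by
    intro j _
    rw [hT]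
    dsimp only
    split_ifs
    · exact hA
    · exact hB
  have heq : Iio κ.ord ∩ ⋂ j : Iio (ω : O), T j = A ∩ B := by
    ext x
    constructor
    · rintro ⟨hx1, hx2⟩
      rw [mem_iInter] at hx2
      have h0 := hx2 ⟨0, omega0_pos⟩
      have h1 := hx2 ⟨1, one_lt_omega0⟩
      rw [hT] at h0 h1
      simp only [if_pos rfl] at h0
      norm_num at h1
      exact ⟨h0, h1⟩
    · rintro ⟨hxA, hxB⟩
      refine ⟨hA.1 hxA, ?_⟩
      rw [mem_iInter]
      rintro ⟨j, hj⟩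
      rw [hT]
      dsimp only
      split_ifs
      · exact hxA
      · exact hxB
  have hres := isClubIn_iInter hκ hω hωκ hclub
  rwa [heq] at hres

lemma isClubIn_acc {κ : Cardinal.{0}} (hκ : κ.IsRegular) (hω : Cardinal.aleph0 < κ)
    {D : Set O} (hD : IsClubIn D κ.ord) :
    IsClubIn {α | α < κ.ord ∧ 0 < α ∧ sSup (D ∩ Iio α) = α} κ.ord := by
  refine ⟨fun x hx => hx.1, ?_, ?_⟩
  · intro α hα
    have hnext : ∀ γ, ∃ x, (γ < κ.ord → x ∈ D ∧ γ < x) ∧ x < κ.ord := by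
      intro γ
      by_cases h : γ < κ.ord
      · obtain ⟨x, hx, hγx, hxκ⟩ := hD.2.1 γ h
        exact ⟨x, fun _ => ⟨hx, hγx⟩, hxκ⟩
      · exact ⟨0, fun h' => absurd h' h, (Cardinal.isSuccLimit_ord hκ.aleph0_le).bot_lt⟩
    choose g hgP hgκ using hnext
    obtain ⟨β, f, hβκ, hαβ, hβ0, hfκ, hfβ, hstep, hcof⟩ :=
      iterate_limit hκ hω g (fun γ hγ => (hgP γ hγ).2) (fun γ _ => hgκ γ) hα
    refine ⟨β, ⟨hβκ, hβ0, ?_⟩, hαβ, hβκ⟩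
    refine sSup_eq_of_unb (fun x hx => hx.2) ?_
    intro x hx
    obtain ⟨n, hn⟩ := hcof x hx
    have h1 := hgP (f n) (hfκ n)
    refine ⟨g (f n), ⟨h1.1, ?_⟩, lt_trans hn h1.2⟩
    rw [← hstep n]; exact hfβ (n + 1)
  · intro α hα hα0 hsup
    refine ⟨hα, hα0, ?_⟩
    refine sSup_eq_of_unb (fun x hx => hx.2) ?_
    intro x hx
    obtain ⟨a, ⟨⟨_, _, ha3⟩, haα⟩, hxa⟩ := exists_gt_of_sSup hsup hx
    obtain ⟨d, hd, hxd⟩ := exists_gt_of_sSup ha3 hxa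
    exact ⟨d, ⟨hd.1, mem_Iio.2 (lt_trans (mem_Iio.1 hd.2) haα)⟩, hxd⟩

def Dseq (κo : O) (e b : Set O → Set O) (i : O) : Set O :=
  Iio κo ∩ ⋂ j : Iio i, (Dseq κo e b j.1 ∩ e (Dseq κo e b j.1) ∩ b (Dseq κo e b j.1))
termination_by i
decreasing_by all_goals exact j.2

lemma Dseq_eq (κo : O) (e b : Set O → Set O) (i : O) :
    Dseq κo e b i =
      Iio κo ∩ ⋂ j : Iio i, (Dseq κo e b j.1 ∩ e (Dseq κo e b j.1) ∩ b (Dseq κo e b j.1)) := by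
  rw [Dseq]

lemma Dseq_subset (κo : O) (e b : Set O → Set O) {j i : O} (h : j < i) :
    Dseq κo e b i ⊆ Dseq κo e b j ∩ e (Dseq κo e b j) ∩ b (Dseq κo e b j) := by
  rw [Dseq_eq κo e b i]
  intro x hx
  exact mem_iInter.1 hx.2 ⟨j, h⟩

lemma Dseq_mono (κo : O) (e b : Set O → Set O) {i i' : O} (h : i ≤ i') :
    Dseq κo e b i' ⊆ Dseq κo e b i := by
  rw [Dseq_eq κo e b i', Dseq_eq κo e b i]
  rintro x ⟨hx1, hx2⟩
  rw [mem_iInter] at hx2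
  exact ⟨hx1, mem_iInter.2 fun j => hx2 ⟨j.1, lt_of_lt_of_le j.2 h⟩⟩

lemma Dseq_club {κ : Cardinal.{0}} (hκ : κ.IsRegular) (hω : Cardinal.aleph0 < κ)
    {e b : Set O → Set O} (he : ∀ D, IsClubIn D κ.ord → IsClubIn (e D) κ.ord)
    (hb : ∀ D, IsClubIn D κ.ord → IsClubIn (b D) κ.ord) :
    ∀ i < κ.ord, IsClubIn (Dseq κ.ord e b i) κ.ord := by
  intro i
  induction i using Ordinal.induction with
  | h i IH =>
    intro hi
    rw [Dseq_eq]
    refine isClubIn_iInter hκ hω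
      (T := fun j => Dseq κ.ord e b j ∩ e (Dseq κ.ord e b j) ∩ b (Dseq κ.ord e b j)) hi
      (fun j hj => ?_)
    have hDj := IH j hj (lt_trans hj hi)
    exact isClubIn_inter hκ hω (isClubIn_inter hκ hω hDj (he _ hDj)) (hb _ hDj)

/-- an amenable C-sequence over `S` can be improved by `Φ_D`
to a club-guessing sequence, for `κ ≥ ℵ₂`. -/
theorem statement7 (κ : Cardinal.{0}) (hκ : κ.IsRegular) (hκ2 : Cardinal.aleph 2 ≤ κ)
    (S : Set O) (hS : IsStatIn S κ.ord)
    (C : O → Set O) (hC : ∀ δ ∈ S, IsClubIn (C δ) δ)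
    (hamen : ∀ D, IsClubIn D κ.ord →
      ¬ IsStatIn {δ ∈ S | sSup ((D ∩ Iio δ) \ C δ) < δ} κ.ord) :
    ∃ D, IsClubIn D κ.ord ∧
      ∀ E, IsClubIn E κ.ord → ∃ δ ∈ S, sSup (nacc (PhiD D (C δ)) ∩ E) = δ := by
  classical
  by_contra hcon
  push_neg at hcon
  have hω : Cardinal.aleph0 < κ := by
    refine lt_of_lt_of_le ?_ hκ2
    have : Cardinal.aleph.{0} 0 < Cardinal.aleph 2 := by
      rw [Cardinal.aleph_lt_aleph]; norm_num
    simpa using this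
  have hlim : Order.IsSuccLimit κ.ord := Cardinal.isSuccLimit_ord hκ.aleph0_le
  have hIio : IsClubIn (Iio κ.ord) κ.ord := isClubIn_Iio hlim
  -- choice function e from the contradiction hypothesis
  have hcon' : ∀ D, IsClubIn D κ.ord → ∃ E, IsClubIn E κ.ord ∧
      ∀ δ ∈ S, sSup (nacc (PhiD D (C δ)) ∩ E) ≠ δ := hcon
  obtain ⟨e, he⟩ : ∃ e : Set O → Set O, ∀ D, IsClubIn D κ.ord → IsClubIn (e D) κ.ord ∧
      ∀ δ ∈ S, sSup (nacc (PhiD D (C δ)) ∩ e D) ≠ δ := by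
    refine ⟨fun D => if h : IsClubIn D κ.ord then (hcon' D h).choose else Iio κ.ord, ?_⟩
    intro D h
    simp only [dif_pos h]
    exact (hcon' D h).choose_spec
  -- choice function b from amenability
  have hbex : ∀ D, IsClubIn D κ.ord → ∃ B, IsClubIn B κ.ord ∧
      ∀ δ, δ ∈ S → δ ∈ B → ¬ sSup ((D ∩ Iio δ) \ C δ) < δ := by
    intro D h
    have h1 := hamen D h
    rw [IsStatIn] at h1
    push_neg at h1
    obtain ⟨B, hB, hBe⟩ := h1 (fun x hx => hS.1 hx.1)
    refine ⟨B, hB, fun δ hδ hδB hlt => ?_⟩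
    have hmem : δ ∈ ({δ | δ ∈ S ∧ sSup ((D ∩ Iio δ) \ C δ) < δ} ∩ B) := ⟨⟨hδ, hlt⟩, hδB⟩
    rw [hBe] at hmem
    exact hmem
  obtain ⟨b, hb⟩ : ∃ b : Set O → Set O, ∀ D, IsClubIn D κ.ord → IsClubIn (b D) κ.ord ∧
      ∀ δ, δ ∈ S → δ ∈ b D → ¬ sSup ((D ∩ Iio δ) \ C δ) < δ := by
    refine ⟨fun D => if h : IsClubIn D κ.ord then (hbex D h).choose else Iio κ.ord, ?_⟩
    intro D h
    simp only [dif_pos h]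
    exact (hbex D h).choose_spec
  -- the recursive sequence of clubs
  set D : O → Set O := Dseq κ.ord e b with hD_def
  have hDclub : ∀ i < κ.ord, IsClubIn (D i) κ.ord :=
    Dseq_club hκ hω (fun D' h => (he D' h).1) (fun D' h => (hb D' h).1)
  set lam1 : O := (Cardinal.aleph 1).ord with hlam1_def
  have hlam1lim : Order.IsSuccLimit lam1 := Cardinal.isSuccLimit_ord (Cardinal.aleph0_le_aleph 1)
  set Lam : O := lam1 + (ω : O) with hLam_def
  have hlam1κ : lam1 < κ.ord := by
    rw [hlam1_def, Cardinal.ord_lt_ord]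
    exact lt_of_lt_of_le (by rw [Cardinal.aleph_lt_aleph]; norm_num) hκ2
  have hωκ : (ω : O) < κ.ord := by rw [Cardinal.lt_ord]; simpa using hω
  have hLam : Lam < κ.ord := Ordinal.isPrincipal_add_ord hκ.aleph0_le hlam1κ hωκ
  have hl1Lam : lam1 ≤ Lam := le_self_add
  have hmono : ∀ {i i' : O}, i ≤ i' → D i' ⊆ D i := fun h => Dseq_mono κ.ord e b h
  have hsubE : ∀ {j i : O}, j < i → D i ⊆ e (D j) :=
    fun h x hx => (Dseq_subset κ.ord e b h hx).1.2
  -- final club and the guessing point δ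
  set Dinf : Set O := D Lam with hDinf_def
  have hDinfclub : IsClubIn Dinf κ.ord := hDclub Lam hLam
  set AccD : Set O := {α | α < κ.ord ∧ 0 < α ∧ sSup (Dinf ∩ Iio α) = α} with hAccD_def
  have hAccclub : IsClubIn AccD κ.ord := isClubIn_acc hκ hω hDinfclub
  have hBclub : IsClubIn (b Dinf) κ.ord := (hb Dinf hDinfclub).1
  obtain ⟨δ, hδS, hδAcc, hδB⟩ : ∃ δ, δ ∈ S ∧ δ ∈ AccD ∧ δ ∈ b Dinf := by
    obtain ⟨δ, h1, h2, h3⟩ := hS.2 _ (isClubIn_inter hκ hω hAccclub hBclub)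
    exact ⟨δ, h1, h2, h3⟩
  have hδκ : δ < κ.ord := hS.1 hδS
  have hδ0 : 0 < δ := hδAcc.2.1
  have hδacc : sSup (Dinf ∩ Iio δ) = δ := hδAcc.2.2
  have hCδ := hC δ hδS
  have hsupC : sSup (C δ) = δ := by
    refine sSup_eq_of_unb (fun x hx => hCδ.1 hx) (fun x hx => ?_)
    obtain ⟨y, hy, h1, _⟩ := hCδ.2.1 x hx
    exact ⟨y, hy, h1⟩
  set A : Set O := (Dinf ∩ Iio δ) \ C δ with hA_def
  have hAsup : sSup A = δ := by
    have hle : sSup A ≤ δ := sSup_le_of_lt (fun x hx => hx.1.2)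
    exact le_antisymm hle (not_lt.1 ((hb Dinf hDinfclub).2 δ hδS hδB))
  have hAunb : ∀ x < δ, ∃ y ∈ A, x < y := fun x hx => exists_gt_of_sSup hAsup hx
  -- the Φ branch used
  have hDiδ : ∀ i ≤ Lam, sSup (D i ∩ Iio δ) = δ := by
    intro i hi
    refine sSup_eq_of_unb (fun x hx => hx.2) (fun x hx => ?_)
    obtain ⟨y, hy, hxy⟩ := exists_gt_of_sSup hδacc hx
    exact ⟨y, ⟨hmono hi hy.1, hy.2⟩, hxy⟩
  have hPhi : ∀ i ≤ Lam,
      PhiD (D i) (C δ) = {γ | ∃ η ∈ C δ, sInf (D i) < η ∧ γ = sSup (D i ∩ Iio η)} := by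
    intro i hi
    rw [PhiD, hsupC, if_pos (hDiδ i hi)]
  set ε : O → O := fun i => sSup (nacc (PhiD (D i) (C δ)) ∩ e (D i)) with hε_def
  have hεub : ∀ i ≤ Lam, ∀ x ∈ nacc (PhiD (D i) (C δ)) ∩ e (D i), x < δ := by
    intro i hi x hx
    have hx1 : x ∈ PhiD (D i) (C δ) := hx.1.1
    rw [hPhi i hi] at hx1
    obtain ⟨η, hη, _, rfl⟩ := hx1
    exact lt_of_le_of_lt (sSup_le_of_lt (fun z hz => hz.2)) (hCδ.1 hη)
  have hεle : ∀ i ≤ Lam, ε i ≤ δ := fun i hi => sSup_le_of_lt (hεub i hi)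
  have hεne : ∀ i < κ.ord, ε i ≠ δ := fun i hi => (he (D i) (hDclub i hi)).2 δ hδS
  -- the η function on A
  set η : O → O := fun β => sInf {y | y ∈ C δ ∧ β < y} with hη_def
  have hηspec : ∀ β ∈ A, η β ∈ C δ ∧ β < η β := by
    intro β hβ
    have hne : {y | y ∈ C δ ∧ β < y}.Nonempty := by
      obtain ⟨y, hy, h1, _⟩ := hCδ.2.1 β hβ.1.2
      exact ⟨y, hy, h1⟩
    exact csInf_mem hne
  have hηδ : ∀ β ∈ A, η β < δ := fun β hβ => hCδ.1 (hηspec β hβ).1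
  have hηmin : ∀ β ∈ A, ∀ y ∈ C δ, y < η β → y < β := by
    intro β hβ y hy hlt
    rcases lt_trichotomy y β with h | h | h
    · exact h
    · exact absurd (h ▸ hy) hβ.2
    · exact absurd (csInf_le (OrderBot.bddBelow _) ⟨hy, h⟩ : η β ≤ y) (not_le.2 hlt)
  -- the γ function
  set γm : O → O → O := fun β i => sSup (D i ∩ Iio (η β)) with hγm_def
  have hγin : ∀ β ∈ A, ∀ i ≤ Lam, β ∈ D i ∩ Iio (η β) :=
    fun β hβ i hi => ⟨hmono hi hβ.1.1, (hηspec β hβ).2⟩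
  have hγge : ∀ β ∈ A, ∀ i ≤ Lam, β ≤ γm β i :=
    fun β hβ i hi => le_csSup (bdd_of_subset_Iio (fun z hz => hz.2)) (hγin β hβ i hi)
  have hγmem : ∀ β ∈ A, ∀ i ≤ Lam, γm β i ∈ D i := by
    intro β hβ i hi
    exact club_sSup_mem (hDclub i (lt_of_le_of_lt hi hLam))
      (lt_trans (hηδ β hβ) hδκ) ⟨β, hγin β hβ i hi⟩
  have hγanti : ∀ β ∈ A, ∀ i i' : O, i ≤ i' → i' ≤ Lam → γm β i' ≤ γm β i := by
    intro β hβ i i' hii hi'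
    exact sSup_mono' (inter_subset_inter_left _ (hmono hii))
      (fun z hz => hz.2) ⟨β, hγin β hβ i' hi'⟩
  -- the key step lemma
  have step : ∀ β ∈ A, ∀ i : O, i + 1 < Lam → γm β (i + 1) = γm β i → β ≤ ε i := by
    intro β hβ i hi1 hstab
    have hiΛ : i ≤ Lam := le_of_lt (lt_trans (lt_add_one i) hi1)
    have hi1Λ : i + 1 ≤ Lam := hi1.le
    have hβδ : β < δ := hβ.1.2
    have hvβ : β ≤ γm β i := hγge β hβ i hiΛ
    have hvD : γm β i ∈ D (i + 1) := by
      rw [← hstab]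
      exact hγmem β hβ (i + 1) hi1Λ
    have hvE : γm β i ∈ e (D i) := hsubE (lt_add_one i) hvD
    have hinf : sInf (D i) < η β :=
      lt_of_le_of_lt (csInf_le (OrderBot.bddBelow _) (hγin β hβ i hiΛ).1) (hηspec β hβ).2
    have hvΦ : γm β i ∈ PhiD (D i) (C δ) := by
      rw [hPhi i hiΛ]
      exact ⟨η β, (hηspec β hβ).1, hinf, rfl⟩
    have hvnacc : γm β i ∈ nacc (PhiD (D i) (C δ)) := by
      refine ⟨hvΦ, fun hmem => ?_⟩
      obtain ⟨-, -, hv0, hvsup⟩ := hmem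
      have hbound : ∀ x ∈ PhiD (D i) (C δ) ∩ Iio (γm β i), ∃ η' ∈ C δ, η' < β ∧ x ≤ η' := by
        intro x hx
        have hx1 := hx.1
        rw [hPhi i hiΛ] at hx1
        obtain ⟨η', hη', _, rfl⟩ := hx1
        have hη'lt : η' < η β := by
          by_contra hge
          push_neg at hge
          have hvle : γm β i ≤ sSup (D i ∩ Iio η') :=
            sSup_mono' (inter_subset_inter_right _ (Iio_subset_Iio hge))
              (fun z hz => hz.2) ⟨β, hγin β hβ i hiΛ⟩
          exact absurd hvle (not_le.2 hx.2)
        exact ⟨η', hη', hηmin β hβ η' hη' hη'lt, sSup_le_of_lt (fun z hz => hz.2)⟩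
      rcases eq_empty_or_nonempty (PhiD (D i) (C δ) ∩ Iio (γm β i)) with hemp | ⟨x0, hx0⟩
      · rw [hemp, csSup_empty] at hvsup
        exact absurd hvsup.symm (by simpa using ne_of_gt hv0)
      · obtain ⟨η0, hη0C, hη0β, _⟩ := hbound x0 hx0
        have hβpos : 0 < β := lt_of_le_of_lt (zero_le : (0:O) ≤ η0) hη0β
        set ρ : O := sSup (C δ ∩ Iio β) with hρ_def
        have hρβ : ρ < β := by
          rcases lt_or_eq_of_le (sSup_le_of_lt (fun z hz => hz.2) : ρ ≤ β) with h | h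
          · exact h
          · exact absurd (hCδ.2.2 β hβδ hβpos h) hβ.2
        have hsb : sSup (PhiD (D i) (C δ) ∩ Iio (γm β i)) ≤ ρ := by
          refine csSup_le' (fun x hx => ?_)
          obtain ⟨η', hη', hη'β, hxη'⟩ := hbound x hx
          exact le_trans hxη' (le_csSup (bdd_of_subset_Iio (fun z hz => hz.2)) ⟨hη', hη'β⟩)
        rw [hvsup] at hsb
        exact absurd (lt_of_le_of_lt hsb (lt_of_lt_of_le hρβ hvβ)) (lt_irrefl (γm β i))
    exact le_trans hvβ (le_csSup
      (bdd_of_subset_Iio (fun z hz => mem_Iio.2 (hεub i hiΛ z hz))) ⟨hvnacc, hvE⟩)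
  -- stabilization along the first ω₁ stages
  have fact1 : ∀ β ∈ A, ∃ i₀ < lam1, ∀ i, i₀ ≤ i → i < lam1 → β ≤ ε i := by
    intro β hβ
    set V : Set O := (fun i => γm β i) '' (Iio lam1) with hV_def
    have hVne : V.Nonempty := ⟨γm β 0, mem_image_of_mem _ hlam1lim.pos⟩
    obtain ⟨i₀, hi₀mem, hi₀eq⟩ := csInf_mem hVne
    have hstab : ∀ i', i₀ ≤ i' → i' < lam1 → γm β i' = sInf V := by
      intro i' h1 h2
      refine le_antisymm ?_ (csInf_le (OrderBot.bddBelow V) (mem_image_of_mem _ h2))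
      rw [← hi₀eq]
      exact hγanti β hβ i₀ i' h1 (le_trans h2.le hl1Lam)
    refine ⟨i₀, hi₀mem, fun i hii hil => ?_⟩
    have hsucc : i + 1 < lam1 := hlam1lim.succ_lt hil
    refine step β hβ i (lt_of_lt_of_le hsucc hl1Lam) ?_
    rw [hstab (i + 1) (le_trans hii (le_of_lt (lt_add_one i))) hsucc, hstab i hii hil]
  -- stabilization along the last ω stages
  have fact2 : ∀ β ∈ A, ∃ n₀ : ℕ, ∀ n : ℕ, n₀ ≤ n → β ≤ ε (lam1 + n) := by
    intro β hβ
    set V : Set O := range (fun n : ℕ => γm β (lam1 + n)) with hV_def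
    obtain ⟨n₀, hn₀eq⟩ := csInf_mem (range_nonempty (fun n : ℕ => γm β (lam1 + n)))
    have hle : ∀ m : ℕ, lam1 + (m : O) ≤ Lam :=
      fun m => add_le_add_right (le_of_lt (nat_lt_omega0 m)) _
    have hstab : ∀ m : ℕ, n₀ ≤ m → γm β (lam1 + m) = sInf V := by
      intro m hm
      refine le_antisymm ?_ (csInf_le (OrderBot.bddBelow V) (mem_range_self m))
      rw [← hn₀eq]
      exact hγanti β hβ _ _ (add_le_add_right (by exact_mod_cast hm) _) (hle m)
    refine ⟨n₀, fun n hn => ?_⟩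
    have h1 : lam1 + (n : O) + 1 < Lam := by
      rw [hLam_def, add_assoc]
      refine add_lt_add_right ?_ _
      exact_mod_cast nat_lt_omega0 (n + 1)
    refine step β hβ (lam1 + n) h1 ?_
    have e1 : lam1 + (n : O) + 1 = lam1 + ((n + 1 : ℕ) : O) := by
      push_cast
      rw [add_assoc]
    rw [e1, hstab (n + 1) (le_trans hn (Nat.le_succ n)), hstab n hn]
  -- choice of stabilization indices
  have nfex : ∀ β : O, ∃ n₀ : ℕ, β ∈ A → ∀ n : ℕ, n₀ ≤ n → β ≤ ε (lam1 + n) := by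
    intro β
    by_cases h : β ∈ A
    · obtain ⟨n₀, hn⟩ := fact2 β h
      exact ⟨n₀, fun _ => hn⟩
    · exact ⟨0, fun h' => absurd h' h⟩
  choose nf hnf using nfex
  have ifex : ∀ β : O, ∃ i₀ : O, β ∈ A → i₀ < lam1 ∧ ∀ i, i₀ ≤ i → i < lam1 → β ≤ ε i := by
    intro β
    by_cases h : β ∈ A
    · obtain ⟨i₀, h1, h2⟩ := fact1 β h
      exact ⟨i₀, fun _ => ⟨h1, h2⟩⟩
    · exact ⟨0, fun h' => absurd h' h⟩
  choose if0 hif using ifex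
  -- final case analysis
  by_cases hcase : ∃ n : ℕ, ∀ x < δ, ∃ β ∈ A, x < β ∧ nf β ≤ n
  · obtain ⟨n, hn⟩ := hcase
    have hΛn : lam1 + (n : O) ≤ Lam := add_le_add_right (le_of_lt (nat_lt_omega0 n)) _
    have hκn : lam1 + (n : O) < κ.ord := lt_of_le_of_lt hΛn hLam
    refine absurd ?_ (hεne (lam1 + n) hκn)
    refine le_antisymm (hεle _ hΛn) (le_of_forall_lt fun x hx => ?_)
    obtain ⟨β, hβ, hxβ, hnβ⟩ := hn x hx
    exact lt_of_lt_of_le hxβ (hnf β hβ n hnβ)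
  · push_neg at hcase
    choose xs hxs1 hxs2 using hcase
    have hβseq : ∀ n : ℕ, ∃ β ∈ A, xs n < β := fun n => hAunb (xs n) (hxs1 n)
    choose βs hβsA hβsgt using hβseq
    set i0 : O := ⨆ n, if0 (βs n) with hi0_def
    have hi0lt : i0 < lam1 := by
      rw [hi0_def, hlam1_def]
      refine Ordinal.iSup_lt_ord ?_ (fun n => (hif (βs n) (hβsA n)).1)
      rw [Cardinal.mk_eq_aleph0 ℕ, (Cardinal.isRegular_aleph_one).cof_eq]
      exact Cardinal.aleph0_lt_aleph_one
    have hi0ge : ∀ n : ℕ, if0 (βs n) ≤ i0 :=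
      fun n => le_ciSup (Ordinal.bddAbove_range _) n
    have hi0κ : i0 < κ.ord := lt_trans hi0lt hlam1κ
    refine absurd ?_ (hεne i0 hi0κ)
    refine le_antisymm (hεle i0 (le_trans hi0lt.le hl1Lam)) (le_of_forall_lt fun x hx => ?_)
    obtain ⟨β, hβA, hxβ⟩ := hAunb x hx
    have hβle : β ≤ xs (nf β) := by
      by_contra hgt
      push_neg at hgt
      exact absurd (hxs2 (nf β) β hβA hgt) (lt_irrefl (nf β))
    have hxβs : x < βs (nf β) := lt_of_lt_of_le hxβ (le_of_lt (lt_of_le_of_lt hβle (hβsgt (nf β))))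
    exact lt_of_lt_of_le hxβs ((hif (βs (nf β)) (hβsA (nf β))).2 i0 (hi0ge (nf β)) hi0lt)
end
end
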